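/- Consider two agents with identical additive valuations and three goods per round: in every round t ∈ {1,2,3}, goods worth 0, 1, and 3 arrive. Then no allocation sequence (assigning each round's goods immediately) satisfies TEFX at all of rounds 1, 2, and 3. -/
import Mathlib

def Wgt : Fin 3 × Fin 3 → ℕ := fun p => ![0,1,3] p.2

def bnd (S : Finset (Fin 3 × Fin 3)) (i : Fin 2) (t : Fin 3) : Finset (Fin 3 × Fin 3) :=
  (if i = 0 then S else Sᶜ).filter (fun p => p.1 ≤ t)

lemma key : ∀ S : Finset (Fin 3 × Fin 3),
    ¬ ∀ (t : Fin 3) (i j : Fin 2), ∀ g ∈ bnd S j t,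
      ((bnd S j t).erase g).sum Wgt ≤ (bnd S i t).sum Wgt := by
  set_option maxRecDepth 10000 in decide

lemma cast_sum (fs : Finset (Fin 3 × Fin 3)) :
    fs.sum (fun p => (![0, 1, 3] : Fin 3 → ℝ) p.2) = ((fs.sum Wgt : ℕ) : ℝ) := by
  rw [Nat.cast_sum]
  refine Finset.sum_congr rfl (fun p _ => ?_)
  unfold Wgt
  obtain ⟨k, hk⟩ := p.2
  interval_cases k <;> norm_num

theorem stmt4 :
    ¬ ∃ A : Fin 3 → Fin 2 → Finset (Fin 3 × Fin 3),
      (∀ t : Fin 3, A t 0 ∪ A t 1 =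
        Finset.univ.filter (fun p : Fin 3 × Fin 3 => p.1 ≤ t)) ∧
      (∀ t : Fin 3, Disjoint (A t 0) (A t 1)) ∧
      (∀ t t' : Fin 3, t ≤ t' → ∀ i : Fin 2, A t i ⊆ A t' i) ∧
      (∀ t : Fin 3, ∀ i j : Fin 2, ∀ g ∈ A t j,
        ((A t j).erase g).sum (fun p => (![0, 1, 3] : Fin 3 → ℝ) p.2)
          ≤ (A t i).sum (fun p => (![0, 1, 3] : Fin 3 → ℝ) p.2)) := by
  rintro ⟨A, hpart, hdisj, hmono, hefx⟩
  have htop : ∀ t : Fin 3, t ≤ 2 := by decide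
  have hmem : ∀ (t : Fin 3) (g : Fin 3 × Fin 3), g.1 ≤ t → g ∈ A t 0 ∪ A t 1 := by
    intro t g hg
    rw [hpart t]
    simp [hg]
  have hA : ∀ (t : Fin 3) (i : Fin 2), A t i = (A 2 i).filter (fun p => p.1 ≤ t) := by
    intro t i
    obtain hi | hi : i = 0 ∨ i = 1 := by omega
    all_goals subst hi
    all_goals ext g
    all_goals simp only [Finset.mem_filter]
    all_goals constructor
    · intro hg
      refine ⟨hmono t 2 (htop t) 0 hg, ?_⟩
      have hu : g ∈ A t 0 ∪ A t 1 := Finset.mem_union_left _ hg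
      rw [hpart t] at hu
      simpa using hu
    · rintro ⟨h2, hle⟩
      rcases Finset.mem_union.mp (hmem t g hle) with h | h
      · exact h
      · exact absurd h2 (fun h2 =>
          Finset.disjoint_left.mp (hdisj 2) h2 (hmono t 2 (htop t) 1 h))
    · intro hg
      refine ⟨hmono t 2 (htop t) 1 hg, ?_⟩
      have hu : g ∈ A t 0 ∪ A t 1 := Finset.mem_union_right _ hg
      rw [hpart t] at hu
      simpa using hu
    · rintro ⟨h2, hle⟩
      rcases Finset.mem_union.mp (hmem t g hle) with h | h
      · exact absurd h2 (Finset.disjoint_left.mp (hdisj 2) (hmono t 2 (htop t) 0 h))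
      · exact h
  have hcomp : A 2 1 = (A 2 0)ᶜ := by
    ext g
    rw [Finset.mem_compl]
    constructor
    · intro h h0
      exact Finset.disjoint_left.mp (hdisj 2) h0 h
    · intro h
      rcases Finset.mem_union.mp (hmem 2 g (htop g.1)) with h' | h'
      · exact absurd h' h
      · exact h'
  have hbnd : ∀ (t : Fin 3) (i : Fin 2), A t i = bnd (A 2 0) i t := by
    intro t i
    obtain hi | hi : i = 0 ∨ i = 1 := by omega
    · subst hi; simpa [bnd] using hA t 0
    · subst hi; rw [hA t 1, hcomp]; simp [bnd]
  refine key (A 2 0) ?_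
  intro t i j g hg
  rw [← hbnd t j] at hg
  rw [← hbnd t j, ← hbnd t i]
  have := hefx t i j g hg
  rw [cast_sum, cast_sum] at this
  exact_mod_cast this
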